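/- There is an absolute constant C > 0 such that for every positive integer d, every real number α, and every real Y ≥ 2, |∑_{n ≥ 1, dn ≤ Y} ε(dn) e^{2πiα d n}| ≤ C · Y^λ · ln Y, where λ = ln 3 / ln 4. -/

import Mathlib

open Finset Real

noncomputable def eps (n : ℕ) : ℂ :=
  if Even ((Nat.digits 2 n).sum) then 1 else -1

lemma eps_zero : eps 0 = 1 := by simp [eps]

lemma eps_norm (n : ℕ) : ‖eps n‖ = 1 := by
  unfold eps; split <;> simp

lemma digitsum_rec (n : ℕ) (h : n ≠ 0) :
    (Nat.digits 2 n).sum = n % 2 + (Nat.digits 2 (n/2)).sum := by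
  rw [Nat.digits_def' one_lt_two (Nat.pos_of_ne_zero h)]; rfl

lemma eps_two_mul (n : ℕ) : eps (2 * n) = eps n := by
  rcases Nat.eq_zero_or_pos n with rfl | hn
  · simp
  · unfold eps
    rw [digitsum_rec (2*n) (by omega)]
    simp [Nat.mul_div_cancel_left, Nat.mul_mod_right]
lemma eps_two_mul_add_one (n : ℕ) : eps (2 * n + 1) = -eps n := by
  unfold eps
  rw [digitsum_rec (2*n+1) (by omega)]
  have h1 : (2*n+1) % 2 = 1 := by omega
  have h2 : (2*n+1) / 2 = n := by omega
  rw [h1, h2, add_comm 1]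
  simp only [Nat.even_add_one]
  by_cases h : Even ((Nat.digits 2 n).sum) <;> simp [h]

lemma eps_pow_add (N m : ℕ) (h : m < 2 ^ N) : eps (2 ^ N + m) = -eps m := by
  induction N generalizing m with
  | zero =>
    interval_cases m
    show eps (2^0+0) = -eps 0
    norm_num [eps, Nat.digits_def' one_lt_two]
  | succ N ih =>
    have hm2 : m / 2 < 2 ^ N := by
      have : m < 2 ^ N * 2 := by rw [← pow_succ]; exact h
      omega
    rcases Nat.even_or_odd m with ⟨q, hq⟩ | ⟨q, hq⟩
    · have : 2 ^ (N+1) + m = 2 * (2 ^ N + q) := by rw [pow_succ]; omega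
      rw [this, eps_two_mul, ih q (by omega), hq]
      rw [show q + q = 2 * q by ring, eps_two_mul]
    · have : 2 ^ (N+1) + m = 2 * (2 ^ N + q) + 1 := by rw [pow_succ]; omega
      rw [this, eps_two_mul_add_one, ih q (by omega), hq, eps_two_mul_add_one]

lemma key_ineq (x : ℝ) : (2*|Real.sin x|)^2 * (2*|Real.sin (2*x)|) ≤ 3 * Real.sqrt 3 := by
  have hs := abs_nonneg (Real.sin x)
  have hc := abs_nonneg (Real.cos x)
  have h2 : |Real.sin (2*x)| = 2 * |Real.sin x| * |Real.cos x| := by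
    rw [Real.sin_two_mul, abs_mul, abs_mul]; norm_num
  have hpy : |Real.sin x|^2 + |Real.cos x|^2 = 1 := by
    rw [sq_abs, sq_abs]; exact Real.sin_sq_add_cos_sq x
  rw [h2]
  set s := |Real.sin x|
  set c := |Real.cos x|
  have hgoal : (2*s)^2 * (2*(2*s*c)) = 16 * s^3 * c := by ring
  rw [hgoal]
  have hsqrt3 : Real.sqrt 3 ^ 2 = 3 := Real.sq_sqrt (by norm_num)
  have hsqrt3nn : 0 ≤ Real.sqrt 3 := Real.sqrt_nonneg 3
  nlinarith [sq_nonneg (16*s^3*c - 3*Real.sqrt 3), sq_nonneg (4*s^2-3), mul_nonneg (mul_nonneg (pow_nonneg hs 3) hc) hsqrt3nn, sq_nonneg ((4*s^2-3)*s), sq_nonneg ((4*s^2-3)*s^2), mul_nonneg (pow_nonneg hs 3) hc]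

lemma prod_step (m : ℕ) (t : ℝ) :
    ∏ k ∈ range (m+1), (2*|Real.sin (2^k * t)|) =
      (2*|Real.sin t|) * ∏ k ∈ range m, (2*|Real.sin (2^k * (2*t))|) := by
  rw [Finset.prod_range_succ', mul_comm]
  congr 1
  · norm_num
  · exact Finset.prod_congr rfl fun k _ => by rw [show (2:ℝ)^(k+1)*t = 2^k*(2*t) by ring]

lemma prod_two_sin_le (N : ℕ) : ∀ s : ℝ, ∏ k ∈ range N, (2*|Real.sin (2^k * s)|) ≤ 2 * (Real.sqrt 3)^N := by
  induction N using Nat.strong_induction_on with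
  | _ N ih =>
    match N with
    | 0 => intro s; simp
    | 1 =>
      intro s
      simp only [Finset.prod_range_one, pow_zero, one_mul, pow_one]
      have : |Real.sin s| ≤ 1 := abs_sin_le_one s
      nlinarith [Real.sqrt_le_sqrt (by norm_num : (1:ℝ) ≤ 3), Real.sqrt_one]
    | (n+2) =>
      intro s
      have hnn : ∀ (m:ℕ) (t:ℝ), (0:ℝ) ≤ ∏ k ∈ range m, (2*|Real.sin (2^k * t)|) := by
        intro m t; exact Finset.prod_nonneg (fun k _ => by positivity)
      have hsqrt3 : Real.sqrt 3 ^ 2 = 3 := Real.sq_sqrt (by norm_num)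
      have hsqrt3nn : (0:ℝ) ≤ Real.sqrt 3 := Real.sqrt_nonneg 3
      by_cases h : 2*|Real.sin s| ≤ Real.sqrt 3
      · rw [prod_step (n+1) s]
        have h1 := ih (n+1) (by omega) (2*s)
        calc (2*|Real.sin s|) * ∏ k ∈ range (n+1), (2*|Real.sin (2^k * (2*s))|)
            ≤ Real.sqrt 3 * (2 * (Real.sqrt 3)^(n+1)) := by
              apply mul_le_mul h h1 (hnn _ _) hsqrt3nn
          _ = 2 * (Real.sqrt 3)^(n+2) := by ring
      · push_neg at h
        rw [prod_step (n+1) s, prod_step n (2*s)]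
        have hkey : (2*|Real.sin s|) * (2*|Real.sin (2*s)|) ≤ 3 := by
          have h1 := key_ineq s
          have hb : (0:ℝ) ≤ 2*|Real.sin (2*s)| := by positivity
          nlinarith [h1, h, hb, hsqrt3, hsqrt3nn]
        have h2 := ih n (by omega) (2*(2*s))
        calc (2*|Real.sin s|) * ((2*|Real.sin (2*s)|) * ∏ k ∈ range n, (2*|Real.sin (2^k * (2*(2*s)))|))
            = ((2*|Real.sin s|) * (2*|Real.sin (2*s)|)) * ∏ k ∈ range n, (2*|Real.sin (2^k * (2*(2*s)))|) := by ring
          _ ≤ 3 * (2 * (Real.sqrt 3)^n) := by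
              apply mul_le_mul hkey h2 (hnn _ _) (by norm_num)
          _ = 2 * (Real.sqrt 3)^(n+2) := by rw [pow_add, hsqrt3]; ring

noncomputable def ee (θ : ℝ) : ℂ := Complex.exp (2 * Real.pi * Complex.I * θ)

lemma ee_norm (x : ℝ) : ‖ee x‖ = 1 := by
  unfold ee
  rw [show (2*Real.pi*Complex.I*(x:ℂ)) = ((2*Real.pi*x : ℝ):ℂ) * Complex.I by push_cast; ring]
  exact Complex.norm_exp_ofReal_mul_I _

noncomputable def SS (M : ℕ) (θ : ℝ) : ℂ := ∑ n ∈ range M, eps n * ee (θ * n)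

lemma ee_norm_eq (θ : ℝ) : ‖1 - ee θ‖ = 2 * |Real.sin (Real.pi * θ)| := by
  have h1 : ee θ = Complex.exp ((2 * Real.pi * θ : ℝ) * Complex.I) := by
    unfold ee; congr 1; push_cast; ring
  rw [h1, Complex.exp_mul_I]
  have hcos : Complex.cos ((2 * Real.pi * θ : ℝ)) = (Real.cos (2 * Real.pi * θ) : ℂ) := by
    rw [Complex.ofReal_cos]
  have hsin : Complex.sin ((2 * Real.pi * θ : ℝ)) = (Real.sin (2 * Real.pi * θ) : ℂ) := by
    rw [Complex.ofReal_sin]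
  rw [hcos, hsin]
  have : (1 : ℂ) - ((Real.cos (2*Real.pi*θ) : ℂ) + (Real.sin (2*Real.pi*θ) : ℂ) * Complex.I)
      = ((1 - Real.cos (2*Real.pi*θ) : ℝ) : ℂ) + ((-Real.sin (2*Real.pi*θ) : ℝ) : ℂ) * Complex.I := by
    push_cast; ring
  rw [this, Complex.norm_add_mul_I]
  have hhalf : Real.sin (Real.pi * θ) ^ 2 = 1/2 - Real.cos (2 * Real.pi * θ)/2 := by
    have := Real.sin_sq_eq_half_sub (Real.pi * θ)
    rw [show 2 * (Real.pi * θ) = 2 * Real.pi * θ by ring] at this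
    exact this
  have : (1 - Real.cos (2*Real.pi*θ))^2 + (-Real.sin (2*Real.pi*θ))^2 = (2 * |Real.sin (Real.pi * θ)|)^2 := by
    have hpy := Real.sin_sq_add_cos_sq (2 * Real.pi * θ)
    rw [mul_pow, sq_abs]
    nlinarith [hhalf, hpy]
  rw [this, Real.sqrt_sq (by positivity)]

lemma SS_even (M : ℕ) (θ : ℝ) : SS (2*M) θ = (1 - ee θ) * SS M (2*θ) := by
  induction M with
  | zero => simp [SS]
  | succ M ih =>
    have h2 : 2*(M+1) = (2*M) + 1 + 1 := by ring
    rw [h2]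
    unfold SS at *
    rw [Finset.sum_range_succ, Finset.sum_range_succ, ih, Finset.sum_range_succ]
    have e1 : eps (2*M) = eps M := eps_two_mul M
    have e2 : eps (2*M+1) = -eps M := eps_two_mul_add_one M
    rw [e1, e2]
    have a1 : ee (θ * (2*M : ℕ)) = ee ((2*θ) * M) := by
      unfold ee; congr 1; push_cast; ring
    have a2 : ee (θ * ((2*M : ℕ) + 1 : ℕ)) = ee ((2*θ) * M) * ee θ := by
      unfold ee; rw [← Complex.exp_add]; congr 1; push_cast; ring
    rw [a1, a2]
    ring

lemma SS_succ (M : ℕ) (θ : ℝ) : SS (M+1) θ = SS M θ + eps M * ee (θ * M) := by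
  unfold SS; rw [Finset.sum_range_succ]

noncomputable def PP (j : ℕ) (θ : ℝ) : ℝ := ∏ k ∈ range j, ‖1 - ee (2^k * θ)‖

lemma PP_nonneg (j : ℕ) (θ : ℝ) : 0 ≤ PP j θ :=
  Finset.prod_nonneg fun k _ => norm_nonneg _

lemma PP_zero (θ : ℝ) : PP 0 θ = 1 := by simp [PP]

lemma PP_succ' (j : ℕ) (θ : ℝ) : PP (j+1) θ = ‖1 - ee θ‖ * PP j (2*θ) := by
  unfold PP
  rw [Finset.prod_range_succ', mul_comm]
  congr 1
  · norm_num
  · exact Finset.prod_congr rfl fun k _ => by rw [show (2:ℝ)^(k+1)*θ = 2^k*(2*θ) by ring]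

lemma PP_le (j : ℕ) (θ : ℝ) : PP j θ ≤ 2 * (Real.sqrt 3)^j := by
  have h : PP j θ = ∏ k ∈ range j, (2*|Real.sin (2^k * (Real.pi * θ))|) := by
    unfold PP
    apply Finset.prod_congr rfl
    intro k _
    rw [ee_norm_eq]
    congr 2
    ring
  rw [h]; exact prod_two_sin_le j _

lemma SS_bound_aux : ∀ M : ℕ, ∀ θ : ℝ, ‖SS M θ‖ ≤ ∑ j ∈ range (Nat.log 2 M + 1), PP j θ := by
  intro M
  induction M using Nat.strong_induction_on with
  | _ M ih =>
    match M with
    | 0 =>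
      intro θ; simp only [SS, Finset.range_zero, Finset.sum_empty, norm_zero]
      exact Finset.sum_nonneg fun j _ => PP_nonneg j θ
    | 1 =>
      intro θ
      have : SS 1 θ = 1 := by
        unfold SS; rw [Finset.sum_range_one, eps_zero]; norm_num
        unfold ee; norm_num
      rw [this, show Nat.log 2 1 + 1 = 1 by simp, Finset.sum_range_one, PP_zero]
      norm_num
    | (M+2) =>
      intro θ
      rcases Nat.even_or_odd (M+2) with ⟨m, hm⟩ | ⟨m, hm⟩
      · -- even case, m ≥ 1
        have hm1 : 1 ≤ m := by omega
        have hMeq : M + 2 = 2 * m := by omega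
        have hlog : Nat.log 2 (M+2) = Nat.log 2 m + 1 := by
          rw [hMeq, show 2*m = m*2 by ring, Nat.log_mul_base (by norm_num) (by omega)]
        rw [hlog, hMeq, SS_even m θ]
        rw [norm_mul]
        calc ‖1 - ee θ‖ * ‖SS m (2*θ)‖
            ≤ ‖1 - ee θ‖ * ∑ j ∈ range (Nat.log 2 m + 1), PP j (2*θ) := by
              apply mul_le_mul_of_nonneg_left (ih m (by omega) (2*θ)) (norm_nonneg _)
          _ = ∑ j ∈ range (Nat.log 2 m + 1), PP (j+1) θ := by
              rw [Finset.mul_sum]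
              exact Finset.sum_congr rfl fun j _ => (PP_succ' j θ).symm
          _ ≤ ∑ j ∈ range (Nat.log 2 m + 1 + 1), PP j θ := by
              have e := Finset.sum_range_succ' (fun j => PP j θ) (Nat.log 2 m + 1)
              simp only [PP_zero] at e
              simp only [e]
              linarith [PP_nonneg 0 θ]
      · -- odd case
        have hm1 : 1 ≤ m := by omega
        have hMeq : M + 2 = 2 * m + 1 := by omega
        have hlog : Nat.log 2 (M+2) = Nat.log 2 m + 1 := by
          rw [hMeq]
          rw [Nat.log_of_one_lt_of_le (by norm_num) (by omega), show (2*m+1)/2 = m by omega]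
        rw [hlog, hMeq, SS_succ (2*m) θ]
        calc ‖SS (2*m) θ + eps (2*m) * ee (θ * (2*m : ℕ))‖
            ≤ ‖SS (2*m) θ‖ + ‖eps (2*m) * ee (θ * (2*m : ℕ))‖ := norm_add_le _ _
          _ ≤ ‖1 - ee θ‖ * ‖SS m (2*θ)‖ + 1 := by
              rw [SS_even m θ, norm_mul]
              have : ‖eps (2*m) * ee (θ * (2*m:ℕ))‖ = 1 := by
                rw [norm_mul, eps_norm, ee_norm]; norm_num
              linarith [this.le, this.ge]
          _ ≤ (∑ j ∈ range (Nat.log 2 m + 1), PP (j+1) θ) + 1 := by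
              have h1 : ‖SS m (2*θ)‖ ≤ ∑ j ∈ range (Nat.log 2 m + 1), PP j (2*θ) := ih m (by omega) (2*θ)
              have h2 : ‖1 - ee θ‖ * ∑ j ∈ range (Nat.log 2 m + 1), PP j (2*θ)
                  = ∑ j ∈ range (Nat.log 2 m + 1), PP (j+1) θ := by
                rw [Finset.mul_sum]
                exact Finset.sum_congr rfl fun j _ => (PP_succ' j θ).symm
              have := mul_le_mul_of_nonneg_left h1 (norm_nonneg (1 - ee θ))
              linarith [this, h2.le, h2.ge]
          _ ≤ ∑ j ∈ range (Nat.log 2 m + 1 + 1), PP j θ := by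
              have e := Finset.sum_range_succ' (fun j => PP j θ) (Nat.log 2 m + 1)
              simp only [PP_zero] at e
              simp only [e]; linarith

lemma geom_le3 (L : ℕ) : ∑ j ∈ range L, (Real.sqrt 3)^j ≤ 2 * (Real.sqrt 3)^L := by
  have hs3 : Real.sqrt 3 ^ 2 = 3 := Real.sq_sqrt (by norm_num)
  have h1 : (1:ℝ) ≤ Real.sqrt 3 := by nlinarith [Real.sqrt_nonneg 3]
  induction L with
  | zero => simp
  | succ L ih =>
    rw [Finset.sum_range_succ, pow_succ]
    have hp : (0:ℝ) ≤ (Real.sqrt 3)^L := by positivity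
    nlinarith [ih, hp]

lemma sqrt3_eq : Real.sqrt 3 = (2:ℝ) ^ (Real.log 3 / Real.log 4 : ℝ) := by
  have h4 : Real.log 4 = 2 * Real.log 2 := by
    rw [show (4:ℝ) = 2^2 by norm_num, Real.log_pow]; push_cast; ring
  have hl2 : Real.log 2 ≠ 0 := by positivity
  rw [Real.rpow_def_of_pos (by norm_num)]
  rw [Real.sqrt_eq_rpow, Real.rpow_def_of_pos (by norm_num)]
  congr 1
  rw [h4]
  field_simp

lemma lam_nonneg : 0 ≤ Real.log 3 / Real.log 4 := by
  apply div_nonneg <;> [exact Real.log_nonneg (by norm_num); exact Real.log_nonneg (by norm_num)]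

lemma sqrt3_pow_le (M : ℕ) (h : 1 ≤ M) :
    (Real.sqrt 3) ^ (Nat.log 2 M) ≤ (M:ℝ) ^ (Real.log 3 / Real.log 4 : ℝ) := by
  set l := Real.log 3 / Real.log 4 with hl
  set L := Nat.log 2 M with hL
  have h1 : (Real.sqrt 3) ^ L = ((2:ℝ)^(L:ℕ)) ^ l := by
    rw [sqrt3_eq, ← Real.rpow_natCast ((2:ℝ)^l) L, ← Real.rpow_natCast (2:ℝ) L,
      ← Real.rpow_mul (by norm_num), ← Real.rpow_mul (by norm_num), mul_comm]
  rw [h1]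
  apply Real.rpow_le_rpow (by positivity) _ lam_nonneg
  have := Nat.pow_log_le_self 2 (by omega : M ≠ 0)
  exact_mod_cast this

lemma gelfond (M : ℕ) (hM : 1 ≤ M) (θ : ℝ) :
    ‖SS M θ‖ ≤ 7 * (M:ℝ) ^ (Real.log 3 / Real.log 4 : ℝ) := by
  have h1 := SS_bound_aux M θ
  have h2 : ∑ j ∈ range (Nat.log 2 M + 1), PP j θ ≤ 2 * ∑ j ∈ range (Nat.log 2 M + 1), (Real.sqrt 3)^j := by
    rw [Finset.mul_sum]
    exact Finset.sum_le_sum fun j _ => PP_le j θ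
  have h3 := geom_le3 (Nat.log 2 M + 1)
  have hs3 : Real.sqrt 3 ^ 2 = 3 := Real.sq_sqrt (by norm_num)
  have hs3nn := Real.sqrt_nonneg 3
  have h4 : (2:ℝ) * (2 * (Real.sqrt 3)^(Nat.log 2 M + 1)) ≤ 7 * (Real.sqrt 3)^(Nat.log 2 M) := by
    rw [pow_succ]
    have hp : (0:ℝ) ≤ (Real.sqrt 3)^(Nat.log 2 M) := by positivity
    have : Real.sqrt 3 ≤ 7/4 := by nlinarith
    nlinarith
  have h5 := sqrt3_pow_le M hM
  have hmono : (2:ℝ) * ∑ j ∈ range (Nat.log 2 M + 1), (Real.sqrt 3)^j ≤ 2 * (2 * (Real.sqrt 3)^(Nat.log 2 M + 1)) := by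
    linarith
  linarith

lemma two_pi_I_ne : (2 * (Real.pi:ℂ) * Complex.I) ≠ 0 := by
  simp [Real.pi_ne_zero, Complex.I_ne_zero]

lemma ee_add (x y : ℝ) : ee (x + y) = ee x * ee y := by
  unfold ee; rw [← Complex.exp_add]; congr 1; push_cast; ring

lemma ee_nat (c : ℕ) : ee c = 1 := by
  unfold ee
  rw [show (2 * (Real.pi:ℂ) * Complex.I * ((c:ℝ):ℂ)) = (c:ℂ) * (2 * (Real.pi:ℂ) * Complex.I) by push_cast; ring]
  exact Complex.exp_nat_mul_two_pi_mul_I c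

lemma char_sum (d m : ℕ) (hd : 1 ≤ d) :
    ∑ j ∈ range d, ee ((j:ℝ) * m / d) = if d ∣ m then (d:ℂ) else 0 := by
  have hd0 : (d:ℝ) ≠ 0 := by positivity
  set z : ℂ := ee ((m:ℝ) / d) with hz
  have hzj : ∀ j : ℕ, ee ((j:ℝ) * m / d) = z ^ j := by
    intro j
    rw [hz]
    unfold ee
    rw [← Complex.exp_nat_mul]
    congr 1
    push_cast
    ring
  rw [Finset.sum_congr rfl fun j _ => hzj j]
  by_cases hdvd : d ∣ m
  · obtain ⟨c, rfl⟩ := hdvd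
    have : z = 1 := by
      rw [hz, show ((d*c : ℕ):ℝ)/d = (c:ℕ) by push_cast; field_simp]
      exact ee_nat c
    rw [this]
    simp [if_pos (Dvd.intro c rfl)]
  · rw [if_neg hdvd]
    have hz1 : z ≠ 1 := by
      intro hcon
      rw [hz] at hcon
      unfold ee at hcon
      rw [Complex.exp_eq_one_iff] at hcon
      obtain ⟨n, hn⟩ := hcon
      rw [show (n:ℂ) * (2 * Real.pi * Complex.I) = (2 * (Real.pi:ℂ) * Complex.I) * (n:ℂ) by ring] at hn
      have : (((m:ℝ)/d : ℝ) : ℂ) = (n:ℂ) := mul_left_cancel₀ two_pi_I_ne hn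
      have h2 : (m:ℝ)/d = (n:ℝ) := by exact_mod_cast this
      have h3 : (m:ℝ) = (n:ℝ) * d := by field_simp at h2; linarith [h2]
      have h4 : (m:ℤ) = n * d := by exact_mod_cast h3
      have : (d:ℤ) ∣ (m:ℤ) := ⟨n, by linarith [h4]⟩
      exact hdvd (Int.ofNat_dvd.mp (by exact_mod_cast this))
    have hzd : z ^ d = 1 := by
      rw [hz]
      unfold ee
      rw [← Complex.exp_nat_mul]
      have hdC : (d:ℂ) ≠ 0 := Nat.cast_ne_zero.mpr (by omega)
      rw [show (d:ℂ) * (2 * Real.pi * Complex.I * (((m:ℝ)/d : ℝ):ℂ)) = (m:ℂ) * (2 * Real.pi * Complex.I) by push_cast; field_simp]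
      exact Complex.exp_nat_mul_two_pi_mul_I m
    rw [geom_sum_eq hz1, hzd]
    simp

lemma icc_sum_bound (K : ℕ) (θ : ℝ) :
    ‖∑ m ∈ Icc 1 K, eps m * ee (θ * m)‖ ≤ 7 * ((K+1 : ℕ):ℝ) ^ (Real.log 3 / Real.log 4 : ℝ) + 1 := by
  have hins : range (K+1) = insert 0 (Icc 1 K) := by
    ext x; simp [Finset.mem_range, Finset.mem_insert, Finset.mem_Icc]; omega
  have h0 : (0:ℕ) ∉ Icc 1 K := by simp
  have hsum : SS (K+1) θ = eps 0 * ee (θ * (0:ℕ)) + ∑ m ∈ Icc 1 K, eps m * ee (θ * m) := by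
    unfold SS; rw [hins, Finset.sum_insert h0]
  have h1 : eps 0 * ee (θ * (0:ℕ)) = 1 := by
    rw [eps_zero, show θ * ((0:ℕ):ℝ) = ((0:ℕ):ℝ) by push_cast; ring, ee_nat 0]
    norm_num
  have h2 : ∑ m ∈ Icc 1 K, eps m * ee (θ * m) = SS (K+1) θ - 1 := by
    rw [hsum, h1]; ring
  rw [h2]
  calc ‖SS (K+1) θ - 1‖ ≤ ‖SS (K+1) θ‖ + ‖(1:ℂ)‖ := norm_sub_le _ _
    _ ≤ 7 * ((K+1 : ℕ):ℝ) ^ (Real.log 3 / Real.log 4 : ℝ) + 1 := by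
        have := gelfond (K+1) (by omega) θ
        simp only [norm_one]
        linarith

lemma dilation (d N : ℕ) (hd : 1 ≤ d) (α : ℝ) :
    ‖∑ n ∈ Icc 1 N, eps (d*n) * ee (α * ((d*n : ℕ):ℝ))‖ ≤
      7 * ((d*N+1 : ℕ):ℝ) ^ (Real.log 3 / Real.log 4 : ℝ) + 1 := by
  set l := Real.log 3 / Real.log 4 with hl
  set f : ℕ → ℂ := fun m => eps m * ee (α * m) with hf
  have step1 : ∑ n ∈ Icc 1 N, eps (d*n) * ee (α * ((d*n : ℕ):ℝ)) =
      ∑ m ∈ (Icc 1 (d*N)).filter (fun m => d ∣ m), f m := by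
    apply Finset.sum_nbij' (i := fun n => d * n) (j := fun m => m / d)
    · intro a ha
      simp only [Finset.mem_Icc, Finset.mem_filter] at *
      refine ⟨⟨Nat.one_le_iff_ne_zero.mpr (Nat.mul_ne_zero (by omega) (by omega)), Nat.mul_le_mul_left d ha.2⟩, Dvd.intro a rfl⟩
    · intro a ha
      simp only [Finset.mem_Icc, Finset.mem_filter] at *
      obtain ⟨⟨h1, h2⟩, c, rfl⟩ := ha
      rw [Nat.mul_div_cancel_left c (by omega)]
      constructor
      · by_contra hcon; push_neg at hcon; interval_cases c <;> omega
      · exact Nat.le_of_mul_le_mul_left h2 (by omega)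
    · intro a _; exact Nat.mul_div_cancel_left a (by omega)
    · intro a ha
      simp only [Finset.mem_Icc, Finset.mem_filter] at ha
      obtain ⟨_, c, rfl⟩ := ha
      rw [Nat.mul_div_cancel_left c (by omega)]
    · intro a _; rfl
  have step2 : (d:ℂ) * ∑ m ∈ (Icc 1 (d*N)).filter (fun m => d ∣ m), f m =
      ∑ j ∈ range d, ∑ m ∈ Icc 1 (d*N), eps m * ee ((α + j/d) * m) := by
    have swap : ∑ j ∈ range d, ∑ m ∈ Icc 1 (d*N), eps m * ee ((α + j/d) * m)
        = ∑ m ∈ Icc 1 (d*N), ∑ j ∈ range d, eps m * ee ((α + j/d) * m) := Finset.sum_comm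
    rw [swap]
    have inner : ∀ m : ℕ, ∑ j ∈ range d, eps m * ee ((α + j/d) * m)
        = (if d ∣ m then (d:ℂ) else 0) * f m := by
      intro m
      have expand : ∀ j : ℕ, eps m * ee ((α + j/d) * m) = ee ((j:ℝ) * m / d) * f m := by
        intro j
        rw [hf]
        simp only []
        rw [show (α + (j:ℝ)/d) * m = (j:ℝ)*m/d + α * m by ring, ee_add]
        ring
      rw [Finset.sum_congr rfl fun j _ => expand j, ← Finset.sum_mul, char_sum d m hd]
    rw [Finset.sum_congr rfl fun m _ => inner m]
    rw [Finset.sum_filter]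
    rw [Finset.mul_sum, Finset.sum_congr rfl]
    intro m _
    by_cases h : d ∣ m <;> simp [h]
  have norm2 : (d:ℝ) * ‖∑ m ∈ (Icc 1 (d*N)).filter (fun m => d ∣ m), f m‖ ≤
      (d:ℝ) * (7 * ((d*N+1 : ℕ):ℝ) ^ l + 1) := by
    have hnorm : ‖(d:ℂ) * ∑ m ∈ (Icc 1 (d*N)).filter (fun m => d ∣ m), f m‖
        = (d:ℝ) * ‖∑ m ∈ (Icc 1 (d*N)).filter (fun m => d ∣ m), f m‖ := by
      rw [norm_mul, Complex.norm_natCast]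
    rw [← hnorm, step2]
    calc ‖∑ j ∈ range d, ∑ m ∈ Icc 1 (d*N), eps m * ee ((α + j/d) * m)‖
        ≤ ∑ j ∈ range d, ‖∑ m ∈ Icc 1 (d*N), eps m * ee ((α + j/d) * m)‖ := norm_sum_le _ _
      _ ≤ ∑ j ∈ range d, (7 * ((d*N+1 : ℕ):ℝ) ^ l + 1) := by
          apply Finset.sum_le_sum
          intro j _
          exact icc_sum_bound (d*N) (α + j/d)
      _ = (d:ℝ) * (7 * ((d*N+1 : ℕ):ℝ) ^ l + 1) := by
          rw [Finset.sum_const, Finset.card_range, nsmul_eq_mul]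
  rw [step1]
  have hd0 : (0:ℝ) < (d:ℝ) := by exact_mod_cast hd
  exact le_of_mul_le_mul_left norm2 hd0

theorem eps_dilated_sum_bound :
    ∃ C > (0 : ℝ), ∀ d : ℕ, 1 ≤ d → ∀ α Y : ℝ, 2 ≤ Y →
      ‖∑ n ∈ Finset.Icc 1 ⌊Y / d⌋₊,
          eps (d * n) * Complex.exp (2 * Real.pi * Complex.I * α * (d * n))‖ ≤
        C * Y ^ (Real.log 3 / Real.log 4) * Real.log Y := by
  refine ⟨30, by norm_num, ?_⟩
  intro d hd α Y hY
  set l := Real.log 3 / Real.log 4 with hldef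
  set N := ⌊Y / d⌋₊ with hN
  have hconv : ∑ n ∈ Finset.Icc 1 N,
      eps (d * n) * Complex.exp (2 * Real.pi * Complex.I * α * (d * n))
      = ∑ n ∈ Finset.Icc 1 N, eps (d*n) * ee (α * ((d*n : ℕ):ℝ)) := by
    apply Finset.sum_congr rfl
    intro n _
    congr 1
    unfold ee
    congr 1
    push_cast
    ring
  rw [hconv]
  have hbound := dilation d N hd α
  have hd0 : (0:ℝ) < d := by exact_mod_cast hd
  have hY0 : (0:ℝ) < Y := by linarith
  have hdN : ((d*N : ℕ):ℝ) ≤ Y := by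
    push_cast
    have h1 : (N:ℝ) ≤ Y / d := Nat.floor_le (by positivity)
    calc (d:ℝ) * N ≤ d * (Y/d) := by
          exact mul_le_mul_of_nonneg_left h1 (le_of_lt hd0)
      _ = Y := by field_simp
  have hl0 : 0 ≤ l := lam_nonneg
  have hl1 : l ≤ 1 := by
    rw [hldef, div_le_one (Real.log_pos (by norm_num))]
    exact Real.log_le_log (by norm_num) (by norm_num)
  have hb1 : ((d*N+1 : ℕ):ℝ) ^ l ≤ (2*Y) ^ l := by
    apply Real.rpow_le_rpow (by positivity) _ hl0
    push_cast
    push_cast at hdN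
    linarith
  have hb2 : (2*Y) ^ l ≤ 2 * Y ^ l := by
    rw [Real.mul_rpow (by norm_num) (le_of_lt hY0)]
    have : (2:ℝ) ^ l ≤ 2 ^ (1:ℝ) := Real.rpow_le_rpow_of_exponent_le (by norm_num) hl1
    rw [Real.rpow_one] at this
    have hYl : (0:ℝ) ≤ Y ^ l := Real.rpow_nonneg (le_of_lt hY0) l
    nlinarith
  have hYl1 : (1:ℝ) ≤ Y ^ l := by
    have := Real.rpow_le_rpow_of_exponent_le (by linarith : (1:ℝ) ≤ Y) hl0
    rwa [Real.rpow_zero] at this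
  have hlog : (1:ℝ)/2 ≤ Real.log Y := by
    have h2 : Real.log 2 ≤ Real.log Y := Real.log_le_log (by norm_num) hY
    have := Real.log_two_gt_d9
    linarith
  have hfinal : 7 * ((d*N+1 : ℕ):ℝ) ^ l + 1 ≤ 30 * Y ^ l * Real.log Y := by
    have c1 : 7 * ((d*N+1 : ℕ):ℝ) ^ l ≤ 14 * Y ^ l := by nlinarith
    have c2 : (1:ℝ) ≤ Y ^ l := hYl1
    have hYl : (0:ℝ) ≤ Y ^ l := by linarith
    nlinarith
  linarith
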